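/- If A and B are n×n skew-symmetric matrices that are diagonally similar up to transposition, then they are HL-clan-reversal-equivalent. -/

import Mathlib

open Matrix

def MInv {m : Type*} [DecidableEq m] (X : Finset m) (A : Matrix m m ℝ) : Matrix m m ℝ :=
  fun i j => if i ∈ X ∧ j ∈ X then -A i j else A i j

def oSub {m : Type*} (A : Matrix m m ℝ) (X Y : Finset m) : Matrix X Y ℝ :=
  A.submatrix (fun i => (i : m)) (fun j => (j : m))

def pSub {m : Type*} (A : Matrix m m ℝ) (X : Finset m) : Matrix X X ℝ :=
  A.submatrix (fun i => (i : m)) (fun j => (j : m))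

def IsHLClan {m : Type*} [Fintype m] [DecidableEq m] (A : Matrix m m ℝ) (X : Finset m) : Prop :=
  (oSub A X Xᶜ).rank ≤ 1 ∧ (oSub A Xᶜ X).rank ≤ 1

def HLCRE {m : Type*} [Fintype m] [DecidableEq m] (A B : Matrix m m ℝ) : Prop :=
  ∃ N : ℕ, ∃ f : ℕ → Matrix m m ℝ, f 0 = A ∧ f N = B ∧
    (∀ k ≤ N, (f k)ᵀ = -(f k)) ∧
    (∀ k < N, ∃ X : Finset m, IsHLClan (f k) X ∧ f (k + 1) = MInv X (f k))

section Aux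

variable {m : Type*} [Fintype m] [DecidableEq m]

/-- sign conjugation by the ±1 vector associated to a finset -/
def conjX (X : Finset m) (A : Matrix m m ℝ) : Matrix m m ℝ :=
  fun i j => (if i ∈ X then (-1 : ℝ) else 1) * (if j ∈ X then (-1 : ℝ) else 1) * A i j

lemma MInv_skew {A : Matrix m m ℝ} (hA : Aᵀ = -A) (X : Finset m) :
    (MInv X A)ᵀ = -(MInv X A) := by
  have h : ∀ i j, A j i = -A i j := fun i j => by
    have := congrFun (congrFun hA i) j; simpa using this
  ext i j
  simp only [MInv, transpose_apply, neg_apply]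
  by_cases h1 : i ∈ X <;> by_cases h2 : j ∈ X <;> simp [h1, h2, h i j, MInv]

lemma conjX_skew {A : Matrix m m ℝ} (hA : Aᵀ = -A) (X : Finset m) :
    (conjX X A)ᵀ = -(conjX X A) := by
  have h : ∀ i j, A j i = -A i j := fun i j => by
    have := congrFun (congrFun hA i) j; simpa using this
  ext i j
  simp only [conjX, transpose_apply, neg_apply, h i j]
  change _ = -(conjX X A i j)
  simp only [conjX]
  ring

lemma clan_univ (A : Matrix m m ℝ) : IsHLClan A Finset.univ := by
  constructor
  · calc (oSub A Finset.univ Finset.univᶜ).rank ≤ Fintype.card ↥(Finset.univᶜ : Finset m) :=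
        Matrix.rank_le_card_width _
      _ ≤ 1 := by simp
  · calc (oSub A Finset.univᶜ Finset.univ).rank ≤ Fintype.card ↥(Finset.univᶜ : Finset m) :=
        Matrix.rank_le_card_height _
      _ ≤ 1 := by simp

lemma clan_singleton (A : Matrix m m ℝ) (i : m) : IsHLClan A {i} := by
  constructor
  · calc (oSub A {i} {i}ᶜ).rank ≤ Fintype.card ↥({i} : Finset m) :=
        Matrix.rank_le_card_height _
      _ ≤ 1 := by simp
  · calc (oSub A {i}ᶜ {i}).rank ≤ Fintype.card ↥({i} : Finset m) :=
        Matrix.rank_le_card_width _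
      _ ≤ 1 := by simp

lemma clan_compl_singleton (A : Matrix m m ℝ) (i : m) : IsHLClan A {i}ᶜ := by
  have hc : (({i}ᶜ : Finset m)ᶜ) = {i} := compl_compl _
  constructor
  · calc (oSub A {i}ᶜ ({i}ᶜ)ᶜ).rank ≤ Fintype.card ↥((({i}ᶜ : Finset m))ᶜ) :=
        Matrix.rank_le_card_width _
      _ ≤ 1 := by rw [hc]; simp
  · calc (oSub A ({i}ᶜ)ᶜ {i}ᶜ).rank ≤ Fintype.card ↥((({i}ᶜ : Finset m))ᶜ) :=
        Matrix.rank_le_card_height _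
      _ ≤ 1 := by rw [hc]; simp

lemma HLCRE_refl {A : Matrix m m ℝ} (hA : Aᵀ = -A) : HLCRE A A :=
  ⟨0, fun _ => A, rfl, rfl, fun _ _ => hA, fun k hk => absurd hk (Nat.not_lt_zero k)⟩

lemma HLCRE_step {A : Matrix m m ℝ} (hA : Aᵀ = -A) {X : Finset m} (hX : IsHLClan A X) :
    HLCRE A (MInv X A) := by
  refine ⟨1, fun k => if k = 0 then A else MInv X A, by simp, by simp, ?_, ?_⟩
  · intro k hk
    by_cases h : k = 0 <;> simp [h, hA, MInv_skew hA]
  · intro k hk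
    interval_cases k
    exact ⟨X, by simpa using hX, by simp⟩

lemma HLCRE_trans {A B C : Matrix m m ℝ} (h1 : HLCRE A B) (h2 : HLCRE B C) : HLCRE A C := by
  obtain ⟨N, f, hf0, hfN, hfs, hfc⟩ := h1
  obtain ⟨M, g, hg0, hgM, hgs, hgc⟩ := h2
  refine ⟨N + M, fun k => if k ≤ N then f k else g (k - N), by simp [hf0], ?_, ?_, ?_⟩
  · by_cases h : N + M ≤ N
    · have hM : M = 0 := by omega
      subst hM
      show (if N + 0 ≤ N then f (N + 0) else g (N + 0 - N)) = C
      rw [if_pos h, Nat.add_zero, hfN, ← hg0, hgM]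
    · show (if N + M ≤ N then f (N + M) else g (N + M - N)) = C
      rw [if_neg h, show N + M - N = M by omega, hgM]
  · intro k hk
    by_cases h : k ≤ N
    · simpa [h] using hfs k h
    · simpa [h] using hgs (k - N) (by omega)
  · intro k hk
    by_cases h : k < N
    · obtain ⟨X, hX1, hX2⟩ := hfc k h
      refine ⟨X, ?_, ?_⟩
      · simpa [show k ≤ N by omega] using hX1
      · simpa [show k ≤ N by omega, show k + 1 ≤ N by omega] using hX2
    · have hk' : k - N < M := by omega
      obtain ⟨X, hX1, hX2⟩ := hgc (k - N) hk'
      have hval : (if k ≤ N then f k else g (k - N)) = g (k - N) := by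
        split_ifs with h'
        · have : k = N := by omega
          subst this
          simp [hfN, hg0]
        · rfl
      have hval2 : (if k + 1 ≤ N then f (k + 1) else g (k + 1 - N)) = g (k - N + 1) := by
        rw [if_neg (by omega), show k + 1 - N = k - N + 1 by omega]
      refine ⟨X, ?_, ?_⟩
      · show IsHLClan (if k ≤ N then f k else g (k - N)) X
        rw [hval]; exact hX1
      · show (if k + 1 ≤ N then f (k + 1) else g (k + 1 - N)) =
          MInv X (if k ≤ N then f k else g (k - N))
        rw [hval2, hval, hX2]

lemma conjX_singleton_eq (A : Matrix m m ℝ) (i : m) :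
    conjX {i} A = MInv {i} (MInv {i}ᶜ (MInv Finset.univ A)) := by
  ext j k
  simp only [conjX, MInv, Finset.mem_compl, Finset.mem_singleton, Finset.mem_univ,
    true_and, and_true]
  by_cases h1 : j = i <;> by_cases h2 : k = i <;> simp [h1, h2] <;> ring

lemma HLCRE_flip {A : Matrix m m ℝ} (hA : Aᵀ = -A) (i : m) : HLCRE A (conjX {i} A) := by
  have s1 : HLCRE A (MInv Finset.univ A) := HLCRE_step hA (clan_univ A)
  have hA1 := MInv_skew hA Finset.univ
  have s2 : HLCRE (MInv Finset.univ A) (MInv {i}ᶜ (MInv Finset.univ A)) :=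
    HLCRE_step hA1 (clan_compl_singleton _ i)
  have hA2 := MInv_skew hA1 ({i}ᶜ : Finset m)
  have s3 : HLCRE (MInv {i}ᶜ (MInv Finset.univ A)) (MInv {i} (MInv {i}ᶜ (MInv Finset.univ A))) :=
    HLCRE_step hA2 (clan_singleton _ i)
  rw [conjX_singleton_eq]
  exact HLCRE_trans (HLCRE_trans s1 s2) s3

lemma conjX_insert {A : Matrix m m ℝ} {X : Finset m} {i : m} (hi : i ∉ X) :
    conjX (insert i X) A = conjX {i} (conjX X A) := by
  ext j k
  simp only [conjX, Finset.mem_insert, Finset.mem_singleton]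
  by_cases h1 : j = i <;> by_cases h2 : k = i <;>
    by_cases h3 : j ∈ X <;> by_cases h4 : k ∈ X <;>
    simp_all <;> ring

lemma HLCRE_conjX {A : Matrix m m ℝ} (hA : Aᵀ = -A) (X : Finset m) : HLCRE A (conjX X A) := by
  induction X using Finset.induction_on with
  | empty =>
    have : conjX (∅ : Finset m) A = A := by
      ext i j; simp [conjX]
    rw [this]; exact HLCRE_refl hA
  | insert i X hi ih =>
    rw [conjX_insert hi]
    exact HLCRE_trans ih (HLCRE_flip (conjX_skew hA X) i)

lemma sign_entry {A B : Matrix m m ℝ} {d : m → ℝ} (hA : Aᵀ = -A) (hB : Bᵀ = -B)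
    (hd : ∀ i, d i ≠ 0) (hE : ∀ i j, d i * B i j = A i j * d j) :
    B = conjX (Finset.univ.filter (fun i => d i < 0)) A := by
  have hAs : ∀ i j, A j i = -A i j := fun i j => by
    have := congrFun (congrFun hA i) j; simpa using this
  have hBs : ∀ i j, B j i = -B i j := fun i j => by
    have := congrFun (congrFun hB i) j; simpa using this
  ext i j
  simp only [conjX, Finset.mem_filter, Finset.mem_univ, true_and]
  have e1 : d i * B i j = A i j * d j := hE i j
  have e2 : d j * B i j = A i j * d i := by
    have := hE j i
    rw [hBs i j, hAs i j] at this
    linarith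
  by_cases hz : A i j = 0
  · have : B i j = 0 := by
      have := e1
      rw [hz] at this
      have := mul_eq_zero.mp (by linarith : d i * B i j = 0)
      tauto
    rw [this, hz]; ring
  · have hsq : d i * d i = d j * d j := by
      have h1 : d i * (d i * B i j) = d i * (A i j * d j) := by rw [e1]
      have h2 : d j * (d j * B i j) = d j * (A i j * d i) := by rw [e2]
      have hBne : B i j ≠ 0 := by
        intro h0
        rw [h0, mul_zero] at e1
        exact hz (by
          have := mul_eq_zero.mp e1.symm
          tauto)
      have : (d i * d i - d j * d j) * B i j = 0 := by nlinarith
      have := mul_eq_zero.mp this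
      rcases this with h | h
      · linarith
      · exact absurd h hBne
    have hcase : d i = d j ∨ d i = -d j := by
      have : (d i - d j) * (d i + d j) = 0 := by nlinarith
      rcases mul_eq_zero.mp this with h | h
      · left; linarith
      · right; linarith
    rcases hcase with h | h
    · -- same sign, B i j = A i j
      have hBij : B i j = A i j := by
        rw [h] at e1
        exact mul_left_cancel₀ (hd j) (by linarith)
      have : (if d i < 0 then (-1 : ℝ) else 1) * (if d j < 0 then (-1 : ℝ) else 1) = 1 := by
        rw [h]; split_ifs <;> ring
      rw [hBij, this, one_mul]
    · -- opposite sign, B i j = -A i j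
      have hBij : B i j = -A i j := by
        rw [h] at e1
        have : d j * (-B i j) = d j * A i j := by linarith
        have := mul_left_cancel₀ (hd j) this
        linarith
      have hne : (if d i < 0 then (-1 : ℝ) else 1) * (if d j < 0 then (-1 : ℝ) else 1) = -1 := by
        rcases Ne.lt_or_gt (hd j) with hj | hj
        · rw [if_neg (by rw [h]; linarith), if_pos hj]; ring
        · rw [if_pos (by rw [h]; linarith), if_neg (by linarith)]; ring
      rw [hBij, hne]; ring

end Aux

theorem stmt_13 {n : ℕ} (A B : Matrix (Fin n) (Fin n) ℝ) (hA : Aᵀ = -A) (hB : Bᵀ = -B)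
    (d : Fin n → ℝ) (hd : ∀ i, d i ≠ 0)
    (h : B = (Matrix.diagonal d)⁻¹ * A * Matrix.diagonal d ∨
         Bᵀ = (Matrix.diagonal d)⁻¹ * A * Matrix.diagonal d) :
    HLCRE A B := by
  have hdet : IsUnit (Matrix.diagonal d).det := by
    rw [Matrix.det_diagonal]
    exact (Finset.prod_ne_zero_iff.mpr (fun i _ => hd i)).isUnit
  have hDD : Matrix.diagonal d * (Matrix.diagonal d)⁻¹ = 1 := Matrix.mul_nonsing_inv _ hdet
  set X : Finset (Fin n) := Finset.univ.filter (fun i => d i < 0) with hX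
  rcases h with h | h
  · have hmul : Matrix.diagonal d * B = A * Matrix.diagonal d := by
      rw [h, ← Matrix.mul_assoc, ← Matrix.mul_assoc, hDD, Matrix.one_mul]
    have hE : ∀ i j, d i * B i j = A i j * d j := by
      intro i j
      have := congrFun (congrFun hmul i) j
      rwa [Matrix.diagonal_mul, Matrix.mul_diagonal] at this
    rw [sign_entry hA hB hd hE]
    exact HLCRE_conjX hA X
  · have hmul : Matrix.diagonal d * Bᵀ = A * Matrix.diagonal d := by
      rw [h, ← Matrix.mul_assoc, ← Matrix.mul_assoc, hDD, Matrix.one_mul]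
    have hBs : ∀ i j, B j i = -B i j := fun i j => by
      have := congrFun (congrFun hB i) j; simpa using this
    have hE : ∀ i j, d i * B i j = (-A) i j * d j := by
      intro i j
      have := congrFun (congrFun hmul i) j
      rw [Matrix.diagonal_mul, Matrix.mul_diagonal] at this
      simp only [Matrix.transpose_apply] at this
      rw [hBs i j] at this
      simp only [Matrix.neg_apply]
      linarith
    have hnA : (-A)ᵀ = -(-A) := by rw [Matrix.transpose_neg, hA, neg_neg]
    have hBeq : B = conjX X (-A) := sign_entry hnA hB hd hE
    have hconj : conjX X (-A) = MInv Finset.univ (conjX X A) := by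
      ext i j
      simp only [conjX, MInv, Matrix.neg_apply, Finset.mem_univ, and_self, if_true]
      ring
    rw [hBeq, hconj]
    exact HLCRE_trans (HLCRE_conjX hA X)
      (HLCRE_step (conjX_skew hA X) (clan_univ _))
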